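/- (Lemma 3 on the Toda lattice.) Let a > 0, let u(n,r,θ) be smooth in (r,θ) for each n ∈ ℤ, let g : ℝ → ℂ be continuous and G : ℝ → ℂ an antiderivative of g (G′ = g), and assume the boundary condition u_r(n,a,θ) = 2n/a + g(θ) for all n ∈ ℤ and θ ∈ ℝ. If φ₁ : ℤ × ℝ → ℂ (differentiable in θ) satisfies equation (V1), then the function φ₄(n,θ) = e^{2inθ + u(n,a,θ) + iaG(θ)}·φ₁(n,θ) satisfies equation (V4). -/

import Mathlib

/-- The radial partial derivative `u_r(n, a, θ)`. -/
noncomputable def uR (u : ℤ → ℝ → ℝ → ℂ) (a : ℝ) (n : ℤ) (θ : ℝ) : ℂ :=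
  deriv (fun r : ℝ => u n r θ) a

/-- The angular partial derivative `u_θ(n, a, θ)`. -/
noncomputable def uT (u : ℤ → ℝ → ℝ → ℂ) (a : ℝ) (n : ℤ) (θ : ℝ) : ℂ :=
  deriv (fun t : ℝ => u n a t) θ

/-- `ω(n, a, θ) = exp(u(n,a,θ) − u(n+1,a,θ))`. -/
noncomputable def om (u : ℤ → ℝ → ℝ → ℂ) (a : ℝ) (n : ℤ) (θ : ℝ) : ℂ :=
  Complex.exp (u n a θ - u (n + 1) a θ)

/-- `u(n,·,·)` is smooth in `(r,θ)` on `{r > 0}` for every `n`. -/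
def SmoothOnHalf (u : ℤ → ℝ → ℝ → ℂ) : Prop :=
  ∀ n : ℤ, ContDiffOn ℝ (⊤ : ℕ∞) (fun p : ℝ × ℝ => u n p.1 p.2) {p : ℝ × ℝ | 0 < p.1}

/-- Equation (V1): the θ-part, restricted to `r = a`, of the original Lax pair of the
polar two-dimensional Toda lattice. -/
def V1 (a : ℝ) (u : ℤ → ℝ → ℝ → ℂ) (φ : ℤ → ℝ → ℂ) : Prop :=
  ∀ (n : ℤ) (θ : ℝ), HasDerivAt (φ n)
    (Complex.I * a * Complex.exp (Complex.I * θ) / 2 * φ (n + 1) θ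
      - Complex.I * a / 2 * (uR u a n θ - Complex.I / a * uT u a n θ) * φ n θ
      + Complex.I * a * Complex.exp (-(Complex.I * θ)) / 2 * om u a (n - 1) θ * φ (n - 1) θ) θ

/-- Equation (V2): the θ-part, restricted to `r = a`, of the Lax pair obtained from the
reflection `θ → −θ`. -/
def V2 (a : ℝ) (u : ℤ → ℝ → ℝ → ℂ) (φ : ℤ → ℝ → ℂ) : Prop :=
  ∀ (n : ℤ) (θ : ℝ), HasDerivAt (φ n)
    (Complex.I * a * Complex.exp (-(Complex.I * θ)) / 2 * φ (n + 1) θ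
      - Complex.I * a / 2 * (uR u a n θ + Complex.I / a * uT u a n θ) * φ n θ
      + Complex.I * a * Complex.exp (Complex.I * θ) / 2 * om u a (n - 1) θ * φ (n - 1) θ) θ

/-- Equation (V3): the θ-part, restricted to `r = a`, of the Lax pair obtained from the
Kelvin transformation. -/
def V3 (a : ℝ) (u : ℤ → ℝ → ℝ → ℂ) (φ : ℤ → ℝ → ℂ) : Prop :=
  ∀ (n : ℤ) (θ : ℝ), HasDerivAt (φ n)
    (Complex.I * a * Complex.exp (Complex.I * θ) / 2 * φ (n + 1) θ
      - Complex.I * a / 2 * (-uR u a n θ + 4 * n / a - Complex.I / a * uT u a n θ) * φ n θ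
      + Complex.I * a * Complex.exp (-(Complex.I * θ)) / 2 * om u a (n - 1) θ * φ (n - 1) θ) θ

/-- Equation (V4): the θ-part, restricted to `r = a`, of the Lax pair obtained from the
reflection `ũ(n) = −u(−n)`. -/
def V4 (a : ℝ) (u : ℤ → ℝ → ℝ → ℂ) (φ : ℤ → ℝ → ℂ) : Prop :=
  ∀ (n : ℤ) (θ : ℝ), HasDerivAt (φ n)
    (Complex.I * a * Complex.exp (Complex.I * θ) / 2 * φ (n - 1) θ
      - Complex.I * a / 2 * (-uR u a n θ + Complex.I / a * uT u a n θ) * φ n θ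
      + Complex.I * a * Complex.exp (-(Complex.I * θ)) / 2 * om u a n θ * φ (n + 1) θ) θ

/-- Lemma 3 on the Toda lattice: under the boundary condition
`u_r(n,a,θ) = 2n/a + g(θ)`, if `φ₁` solves (V1) then
`φ₄(n,θ) = e^{2inθ + u(n,a,θ) + iaG(θ)} φ₁(n,θ)` solves (V4), where `G′ = g`. -/
theorem toda_lemma3 (a : ℝ) (ha : 0 < a) (u : ℤ → ℝ → ℝ → ℂ) (hu : SmoothOnHalf u)
    (g G : ℝ → ℂ) (hg : Continuous g) (hG : ∀ θ : ℝ, HasDerivAt G (g θ) θ)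
    (hbc : ∀ (n : ℤ) (θ : ℝ), uR u a n θ = 2 * n / a + g θ)
    (φ₁ : ℤ → ℝ → ℂ) (hφ₁ : V1 a u φ₁) :
    V4 a u (fun n θ =>
      Complex.exp (2 * Complex.I * n * θ + u n a θ + Complex.I * a * G θ) * φ₁ n θ) := by
  intro n θ
  have haC : (a : ℂ) ≠ 0 := by exact_mod_cast ha.ne'
  have hopen : IsOpen {p : ℝ × ℝ | 0 < p.1} := isOpen_lt continuous_const continuous_fst
  have hmem : (a, θ) ∈ {p : ℝ × ℝ | 0 < p.1} := ha
  have hut : ∀ m : ℤ, HasDerivAt (fun t : ℝ => u m a t) (uT u a m θ) θ := by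
    intro m
    have h1 : DifferentiableAt ℝ (fun p : ℝ × ℝ => u m p.1 p.2) (a, θ) :=
      (((hu m).contDiffAt (hopen.mem_nhds hmem)).differentiableAt (by simp))
    have h2 : DifferentiableAt ℝ (fun t : ℝ => ((a, t) : ℝ × ℝ)) θ :=
      (differentiableAt_const _).prodMk differentiableAt_id
    exact (h1.comp θ h2).hasDerivAt
  have h1 : HasDerivAt (fun t : ℝ => 2 * Complex.I * (n : ℂ) * (t : ℂ)) (2 * Complex.I * n) θ := by
    simpa using (Complex.ofRealCLM.hasDerivAt (x := θ)).const_mul (2 * Complex.I * (n : ℂ))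
  have h3 : HasDerivAt (fun t : ℝ => Complex.I * (a : ℂ) * G t) (Complex.I * a * g θ) θ :=
    (hG θ).const_mul _
  have hE : HasDerivAt
      (fun t : ℝ => Complex.exp (2 * Complex.I * n * t + u n a t + Complex.I * a * G t))
      (Complex.exp (2 * Complex.I * n * θ + u n a θ + Complex.I * a * G θ)
        * (2 * Complex.I * n + uT u a n θ + Complex.I * a * g θ)) θ :=
    ((h1.add (hut n)).add h3).cexp
  have hD := hE.mul (hφ₁ n θ)
  have hA : Complex.exp (-(Complex.I * θ)) * om u a n θ
        * Complex.exp (2 * Complex.I * ((n + 1 : ℤ) : ℂ) * θ + u (n + 1) a θ + Complex.I * a * G θ)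
      = Complex.exp (Complex.I * θ)
        * Complex.exp (2 * Complex.I * (n : ℂ) * θ + u n a θ + Complex.I * a * G θ) := by
    rw [om, ← Complex.exp_add, ← Complex.exp_add, ← Complex.exp_add]
    congr 1
    push_cast
    ring
  have hB : Complex.exp (Complex.I * θ)
        * Complex.exp (2 * Complex.I * ((n - 1 : ℤ) : ℂ) * θ + u (n - 1) a θ + Complex.I * a * G θ)
      = Complex.exp (-(Complex.I * θ)) * om u a (n - 1) θ
        * Complex.exp (2 * Complex.I * (n : ℂ) * θ + u n a θ + Complex.I * a * G θ) := by
    rw [om, ← Complex.exp_add, ← Complex.exp_add, ← Complex.exp_add]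
    congr 1
    have : (n - 1 : ℤ) + 1 = n := by ring
    rw [this]
    push_cast
    ring
  have hinv : (a : ℂ) * (a : ℂ)⁻¹ = 1 := mul_inv_cancel₀ haC
  show HasDerivAt
    (fun t : ℝ => Complex.exp (2 * Complex.I * n * t + u n a t + Complex.I * a * G t) * φ₁ n t) _ θ
  refine hD.congr_deriv (Eq.symm ?_)
  rw [hbc n θ]
  linear_combination
    (Complex.I * a * φ₁ (n + 1) θ / 2) * hA
    + (Complex.I * a * φ₁ (n - 1) θ / 2) * hB
    + ((uT u a n θ + 2 * Complex.I * n)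
        * Complex.exp (2 * Complex.I * n * θ + u n a θ + Complex.I * a * G θ) * φ₁ n θ) * hinv
    - ((a : ℂ) * (a : ℂ)⁻¹ * uT u a n θ
        * Complex.exp (2 * Complex.I * n * θ + u n a θ + Complex.I * a * G θ) * φ₁ n θ)
        * Complex.I_sq
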